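/- Let A be a list of n elements of a linear order, not necessarily distinct, and define a tie-breaking comparison: i beats k iff A[k] < A[i], or A[k] = A[i] and k < i. Then the rank function rank(i) = |{k ≠ i : i beats k}| is a bijection from {0,...,n-1} onto {0,...,n-1}. -/

import Mathlib

/-- With the tie-breaking comparison `i beats k ↔ A k < A i ∨ (A k = A i ∧ k < i)`,
the rank function `rank i = #{k | i beats k}` is a bijection from `{0,…,n-1}` onto
`{0,…,n-1}`, even when `A` has repeated values. -/
theorem stmt_14 {α : Type*} [LinearOrder α] (n : ℕ) (A : Fin n → α) :
    Set.BijOn (fun i : Fin n =>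
        (Finset.univ.filter fun k : Fin n => A k < A i ∨ (A k = A i ∧ k < i)).card)
      Set.univ (Set.Iio n) := by
  set f : Fin n → Lex (α × Fin n) := fun i => toLex (A i, i) with hf
  have hbeat : ∀ i k : Fin n,
      (A k < A i ∨ (A k = A i ∧ k < i)) ↔ f k < f i := by
    intro i k
    simp [hf, Prod.Lex.lt_iff]
  set rank : Fin n → ℕ := fun i =>
    (Finset.univ.filter fun k : Fin n => A k < A i ∨ (A k = A i ∧ k < i)).card
    with hrank
  have hrank' : ∀ i, rank i = (Finset.univ.filter fun k => f k < f i).card := by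
    intro i
    apply congrArg Finset.card
    ext k
    simp [hbeat i k]
  have hmaps : ∀ i, rank i < n := by
    intro i
    rw [hrank']
    calc (Finset.univ.filter fun k => f k < f i).card
        ≤ (Finset.univ.erase i).card := by
          apply Finset.card_le_card
          intro k hk
          simp only [Finset.mem_filter] at hk
          simp only [Finset.mem_erase, Finset.mem_univ, and_true]
          rintro rfl
          exact lt_irrefl _ hk.2
      _ < n := by
          rw [Finset.card_erase_of_mem (Finset.mem_univ i), Finset.card_univ,
            Fintype.card_fin]
          exact Nat.sub_lt (Nat.pos_of_ne_zero (fun h => (h ▸ i).elim0)) one_pos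
  have hinj : Function.Injective rank := by
    have hmono : ∀ i j : Fin n, f i < f j → rank i < rank j := by
      intro i j hij
      rw [hrank' i, hrank' j]
      apply Finset.card_lt_card
      constructor
      · intro k hk
        simp only [Finset.mem_filter, Finset.mem_univ, true_and] at hk ⊢
        exact hk.trans hij
      · intro hsub
        have := hsub (by simp [hij] : i ∈ Finset.univ.filter fun k => f k < f j)
        simp at this
    intro i j h
    by_contra hne
    have hfne : f i ≠ f j := fun he => hne (by
      have := congrArg (fun p => (ofLex p).2) he
      simpa [hf] using this)
    rcases lt_or_gt_of_ne hfne with hlt | hlt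
    · exact absurd h (Nat.ne_of_lt (hmono _ _ hlt))
    · exact absurd h.symm (Nat.ne_of_lt (hmono _ _ hlt))
  refine ⟨fun i _ => hmaps i, fun i _ j _ h => hinj h, ?_⟩
  have himg : rank '' Set.univ = Set.Iio n := by
    apply Set.eq_of_subset_of_ncard_le
    · rintro x ⟨i, _, rfl⟩
      exact hmaps i
    · rw [Set.ncard_image_of_injective _ hinj]
      rw [Set.ncard_univ, Nat.card_eq_fintype_card, Fintype.card_fin]
      rw [Set.ncard_eq_toFinset_card']
      simp
    · exact Set.finite_Iio n
  exact himg.ge
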